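/- Let m be a nonnegative integer, k = 4m+3, and let t < n be nonnegative integers. Let x be a nonnegative integer less than 2^{n+1} with binary digits x_i and x_n = 1, and let y_i, z_i ∈ {0,1} for i = n, n−1, ..., n−t be given digits with x_i + y_i + z_i ≡ 0 (mod 2) for all such i, y_n = 0 and z_n = 1. Define s_j = Σ_{i=n−j}^{n} (x_i + z_i − k·y_i)·2^{i+j−n} for j = 0, 1, ..., t, and suppose 0 ≤ s_j < k for all j = 0, ..., t. Then there exist unique digits y_i, z_i ∈ {0,1} for i = n−t−1, n−t−2, ..., 0 such that the numbers y = Σ_{i=0}^{n} y_i·2^i and z = Σ_{i=0}^{n} z_i·2^i satisfy x ⊕ y ⊕ z = 0 and y = ⌊(x+z)/k⌋. -/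

import Mathlib

/-- The i-th binary digit of x. -/
def bitd (x i : ℕ) : ℕ := x / 2 ^ i % 2

/-- The sequence s_j = Σ_{i=n−j}^{n} (x_i + z_i − k·y_i)·2^{i+j−n}, where the digits
y_i, z_i are given by the digit functions yd, zd. -/
def sgen' (k : ℤ) (n : ℕ) (x : ℕ) (yd zd : ℕ → ℕ) (j : ℕ) : ℤ :=
  ∑ i ∈ Finset.Icc (n - j) n,
    ((bitd x i : ℤ) + (zd i : ℤ) - k * (yd i : ℤ)) * 2 ^ (i + j - n)

lemma bitd_le_one (x i : ℕ) : bitd x i ≤ 1 :=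
  Nat.lt_succ_iff.mp (Nat.mod_lt _ (by norm_num))

lemma sum_bitd (x N : ℕ) : ∑ i ∈ Finset.range N, bitd x i * 2 ^ i = x % 2 ^ N := by
  induction N with
  | zero => simp [Nat.mod_one]
  | succ N ih =>
    rw [Finset.sum_range_succ, ih, Nat.mod_pow_succ, bitd]
    ring

lemma sum_bitd_of_lt {x N : ℕ} (h : x < 2 ^ N) :
    ∑ i ∈ Finset.range N, bitd x i * 2 ^ i = x := by
  rw [sum_bitd, Nat.mod_eq_of_lt h]

lemma sum_bits_lt (f : ℕ → ℕ) (N : ℕ) (hf : ∀ i < N, f i ≤ 1) :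
    ∑ i ∈ Finset.range N, f i * 2 ^ i < 2 ^ N := by
  induction N with
  | zero => simp
  | succ N ih =>
    rw [Finset.sum_range_succ, pow_succ]
    have h1 : f N * 2 ^ N ≤ 1 * 2 ^ N := Nat.mul_le_mul_right _ (hf N (by omega))
    rw [one_mul] at h1
    have h2 := ih (fun i hi => hf i (by omega))
    omega

lemma bitd_low {a b N j : ℕ} (ha : a < 2 ^ N) (hj : j < N) :
    bitd (a + b * 2 ^ N) j = bitd a j := by
  have hp : (2:ℕ) ^ j * 2 ^ (N - j) = 2 ^ N := by rw [← pow_add]; congr 1; omega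
  have h1 : a + b * 2 ^ N = a + 2 ^ j * (b * 2 ^ (N - j)) := by
    rw [show (2:ℕ) ^ j * (b * 2 ^ (N - j)) = b * (2 ^ j * 2 ^ (N - j)) by ring, hp]
  rw [bitd, h1, Nat.add_mul_div_left _ _ (Nat.two_pow_pos j)]
  have hp2 : (2:ℕ) ^ (N - j - 1) * 2 = 2 ^ (N - j) := by rw [← pow_succ]; congr 1; omega
  have h2 : b * 2 ^ (N - j) = (b * 2 ^ (N - j - 1)) * 2 := by rw [mul_assoc, hp2]
  rw [h2, Nat.add_mul_mod_self_right, bitd]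

lemma bitd_high {a b N j : ℕ} (ha : a < 2 ^ N) (hj : N ≤ j) :
    bitd (a + b * 2 ^ N) j = bitd b (j - N) := by
  have h1 : (2:ℕ) ^ j = 2 ^ N * 2 ^ (j - N) := by rw [← pow_add]; congr 1; omega
  rw [bitd, h1, ← Nat.div_div_eq_div_mul, mul_comm b,
    Nat.add_mul_div_left _ _ (Nat.two_pow_pos N),
    Nat.div_eq_of_lt ha, zero_add, bitd]

lemma bitd_sum (f : ℕ → ℕ) (N : ℕ) (hf : ∀ i < N, f i ≤ 1) (j : ℕ) :
    bitd (∑ i ∈ Finset.range N, f i * 2 ^ i) j = if j < N then f j else 0 := by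
  induction N with
  | zero => simp [bitd]
  | succ N ih =>
    have hfN : ∀ i < N, f i ≤ 1 := fun i hi => hf i (by omega)
    rw [Finset.sum_range_succ]
    rcases lt_trichotomy j N with h | h | h
    · rw [bitd_low (sum_bits_lt f N hfN) h, ih hfN, if_pos h, if_pos (by omega)]
    · rw [h, bitd_high (sum_bits_lt f N hfN) le_rfl, if_pos (by omega), Nat.sub_self, bitd]
      have := hf N (by omega)
      interval_cases hfn : (f N) <;> simp [hfn]
    · rw [bitd_high (sum_bits_lt f N hfN) (by omega), if_neg (by omega), bitd]
      have h2 : f N < 2 ^ (j - N) := by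
        have h3 : (2:ℕ) ^ 1 ≤ 2 ^ (j - N) := Nat.pow_le_pow_right (by norm_num) (by omega)
        have := hf N (by omega)
        simp at h3
        omega
      rw [Nat.div_eq_of_lt h2]

lemma bitd_xor (a b i : ℕ) : bitd (a ^^^ b) i = (bitd a i + bitd b i) % 2 := by
  have h := Nat.testBit_xor a b i
  simp only [Nat.testBit_eq_decide_div_mod_eq] at h
  have ha := bitd_le_one a i
  have hb := bitd_le_one b i
  have hc := bitd_le_one (a ^^^ b) i
  unfold bitd at *
  interval_cases h1 : (a / 2 ^ i % 2) <;> interval_cases h2 : (b / 2 ^ i % 2) <;>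
    simp [h1, h2] at h ⊢ <;> omega

lemma sgen'_zero (k : ℤ) (n x : ℕ) (yd zd : ℕ → ℕ) :
    sgen' k n x yd zd 0 = (bitd x n : ℤ) + (zd n : ℤ) - k * (yd n : ℤ) := by
  unfold sgen'
  rw [Nat.sub_zero, Finset.Icc_self, Finset.sum_singleton]
  simp

lemma sgen'_succ (k : ℤ) (n x : ℕ) (yd zd : ℕ → ℕ) (j : ℕ) (hj : j < n) :
    sgen' k n x yd zd (j + 1) = 2 * sgen' k n x yd zd j +
      ((bitd x (n - (j+1)) : ℤ) + (zd (n - (j+1)) : ℤ) - k * (yd (n - (j+1)) : ℤ)) := by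
  unfold sgen'
  have hset : Finset.Icc (n - (j+1)) n = insert (n - (j+1)) (Finset.Icc (n - j) n) := by
    ext i
    simp only [Finset.mem_Icc, Finset.mem_insert]
    omega
  rw [hset, Finset.sum_insert (by simp only [Finset.mem_Icc]; omega)]
  rw [show n - (j+1) + (j+1) - n = 0 by omega, pow_zero, mul_one, Finset.mul_sum]
  rw [add_comm]
  congr 1
  apply Finset.sum_congr rfl
  intro i hi
  simp only [Finset.mem_Icc] at hi
  rw [show i + (j+1) - n = (i + j - n) + 1 by omega, pow_succ]
  ring

lemma sgen'_full (k : ℤ) (n x : ℕ) (yd zd : ℕ → ℕ) :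
    sgen' k n x yd zd n = ∑ i ∈ Finset.range (n+1),
      ((bitd x i : ℤ) + (zd i : ℤ) - k * (yd i : ℤ)) * 2 ^ i := by
  unfold sgen'
  rw [Nat.sub_self, show Finset.Icc 0 n = Finset.range (n+1) by
    ext i; simp [Nat.lt_succ_iff]]
  apply Finset.sum_congr rfl
  intro i hi
  simp only [Finset.mem_range, Nat.lt_succ_iff] at hi
  rw [show i + n - n = i by omega]

lemma sgen'_eval (K : ℤ) (n x : ℕ) (f g : ℕ → ℕ) (Y Z : ℕ) (hx : x < 2 ^ (n+1))
    (hYe : Y = ∑ i ∈ Finset.range (n+1), f i * 2 ^ i)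
    (hZe : Z = ∑ i ∈ Finset.range (n+1), g i * 2 ^ i) :
    sgen' K n x f g n = (x : ℤ) + (Z : ℤ) - K * (Y : ℤ) := by
  rw [sgen'_full]
  have h1 : ∑ i ∈ Finset.range (n+1), ((bitd x i : ℤ) + (g i : ℤ) - K * (f i : ℤ)) * 2 ^ i
      = (∑ i ∈ Finset.range (n+1), (bitd x i : ℤ) * 2 ^ i)
        + (∑ i ∈ Finset.range (n+1), (g i : ℤ) * 2 ^ i)
        - K * (∑ i ∈ Finset.range (n+1), (f i : ℤ) * 2 ^ i) := by
    rw [Finset.mul_sum, ← Finset.sum_add_distrib, ← Finset.sum_sub_distrib]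
    apply Finset.sum_congr rfl
    intro i _
    ring
  rw [h1]
  have hxe : (∑ i ∈ Finset.range (n+1), (bitd x i : ℤ) * 2 ^ i) = (x : ℤ) := by
    have h := congrArg (Nat.cast : ℕ → ℤ) (sum_bitd_of_lt hx)
    push_cast at h
    exact h
  have hye : (∑ i ∈ Finset.range (n+1), (f i : ℤ) * 2 ^ i) = (Y : ℤ) := by
    have h := congrArg (Nat.cast : ℕ → ℤ) hYe
    push_cast at h
    exact h.symm
  have hze : (∑ i ∈ Finset.range (n+1), (g i : ℤ) * 2 ^ i) = (Z : ℤ) := by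
    have h := congrArg (Nat.cast : ℕ → ℤ) hZe
    push_cast at h
    exact h.symm
  rw [hxe, hye, hze]
def bstep (m : ℕ) (xb : ℕ) (s : ℤ) : ℤ × ℕ × ℕ :=
  if 2*s + 2*xb < 4*m+3 then (2*s + 2*xb, 0, xb) else (2*s + 1 - (4*m+3), 1, 1 - xb)

def bld (m n t x : ℕ) (yd zd : ℕ → ℕ) : ℕ → ℤ × ℕ × ℕ
  | 0 => (2, yd n, zd n)
  | j+1 =>
    let s := (bld m n t x yd zd j).1
    if j + 1 ≤ t then
      (2*s + (bitd x (n-(j+1)) : ℤ) + (zd (n-(j+1)) : ℤ) - (4*m+3) * (yd (n-(j+1)) : ℤ),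
        yd (n-(j+1)), zd (n-(j+1)))
    else bstep m (bitd x (n-(j+1))) s

def Ydig (m n t x : ℕ) (yd zd : ℕ → ℕ) (i : ℕ) : ℕ :=
  if n - t ≤ i then yd i else (bld m n t x yd zd (n - i)).2.1

def Zdig (m n t x : ℕ) (yd zd : ℕ → ℕ) (i : ℕ) : ℕ :=
  if n - t ≤ i then zd i else (bld m n t x yd zd (n - i)).2.2

lemma bstep_fst (m xb : ℕ) (s : ℤ) (hxb : xb ≤ 1) :
    (bstep m xb s).1 = 2*s + (xb : ℤ) + ((bstep m xb s).2.2 : ℤ)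
      - (4*m+3) * ((bstep m xb s).2.1 : ℤ) := by
  unfold bstep
  split <;> simp <;> push_cast [hxb] <;> ring

lemma bstep_digits (m xb : ℕ) (s : ℤ) (hxb : xb ≤ 1) :
    (bstep m xb s).2.1 ≤ 1 ∧ (bstep m xb s).2.2 ≤ 1 ∧
      (xb + (bstep m xb s).2.1 + (bstep m xb s).2.2) % 2 = 0 := by
  unfold bstep
  split <;> simp <;> omega

lemma bstep_bound (m xb : ℕ) (s : ℤ) (hxb : xb ≤ 1) (h0 : 0 ≤ s) (h1 : s < 4*m+3) :
    0 ≤ (bstep m xb s).1 ∧ (bstep m xb s).1 < 4*m+3 := by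
  unfold bstep
  split <;> simp <;> constructor <;> omega

lemma bstep_even (m xb : ℕ) (s : ℤ) : Even (bstep m xb s).1 := by
  unfold bstep
  split <;> rw [Int.even_iff] <;> push_cast <;> omega

lemma inc_even (a b c : ℕ) (M : ℤ) (h : (a + b + c) % 2 = 0) :
    ((a:ℤ) + c - (4*M+3)*b) % 2 = 0 := by
  have h1 : ((a:ℤ) + (b:ℤ) + (c:ℤ)) % 2 = 0 := by
    have := congrArg (Nat.cast : ℕ → ℤ) h
    push_cast at this
    omega
  have h2 : ((4*M+4)*(b:ℤ)) % 2 = 0 := Int.even_iff.mp ⟨(2*M+2)*b, by ring⟩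
  have h3 : ((a:ℤ) + c - (4*M+3)*b) = (((a:ℤ) + b + c) - (4*M+4)*b) := by ring
  rw [h3]
  omega

lemma Ydig_hi {m t n x : ℕ} {yd zd : ℕ → ℕ} {i : ℕ} (h : n - t ≤ i) :
    Ydig m n t x yd zd i = yd i ∧ Zdig m n t x yd zd i = zd i := by
  unfold Ydig Zdig; rw [if_pos h, if_pos h]; exact ⟨rfl, rfl⟩

lemma Ydig_lo {m t n x : ℕ} {yd zd : ℕ → ℕ} {i : ℕ} (h : i < n - t) :
    Ydig m n t x yd zd i = (bld m n t x yd zd (n - i)).2.1 ∧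
    Zdig m n t x yd zd i = (bld m n t x yd zd (n - i)).2.2 := by
  unfold Ydig Zdig; rw [if_neg (by omega), if_neg (by omega)]; exact ⟨rfl, rfl⟩

section ctx
variable (m t n x : ℕ) (yd zd : ℕ → ℕ)

lemma bld_sgen (htn : t < n) (hxn : bitd x n = 1) (hyn : yd n = 0) (hzn : zd n = 1) :
    ∀ j ≤ n, sgen' (4*m+3) n x (Ydig m n t x yd zd) (Zdig m n t x yd zd) j
      = (bld m n t x yd zd j).1 := by
  intro j hj
  induction j with
  | zero =>
    rw [sgen'_zero, (Ydig_hi (by omega)).1, (Ydig_hi (by omega)).2, hxn, hyn, hzn]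
    simp [bld]
  | succ j ih =>
    have hj' : j < n := by omega
    rw [sgen'_succ _ _ _ _ _ _ hj', ih (by omega)]
    by_cases hcase : j + 1 ≤ t
    · have hge : n - t ≤ n - (j+1) := by omega
      rw [(Ydig_hi hge).1, (Ydig_hi hge).2]
      simp only [bld, if_pos hcase]
      ring
    · have hlt : n - (j+1) < n - t := by omega
      have hni : n - (n - (j+1)) = j + 1 := by omega
      rw [(Ydig_lo hlt).1, (Ydig_lo hlt).2, hni]
      simp only [bld, if_neg hcase]
      rw [bstep_fst _ _ _ (bitd_le_one x _)]
      ring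

lemma bld_bound (htn : t < n) (hxn : bitd x n = 1) (hyn : yd n = 0) (hzn : zd n = 1)
    (hs : ∀ j ≤ t, 0 ≤ sgen' (4*m+3) n x yd zd j ∧ sgen' (4*m+3) n x yd zd j < 4*m+3) :
    ∀ j ≤ n, 0 ≤ (bld m n t x yd zd j).1 ∧ (bld m n t x yd zd j).1 < 4*m+3 := by
  intro j hj
  induction j with
  | zero =>
    simp [bld]
    omega
  | succ j ih =>
    by_cases hcase : j + 1 ≤ t
    · have h1 := bld_sgen m t n x yd zd htn hxn hyn hzn (j+1) hj
      have h2 : sgen' (4*m+3) n x yd zd (j+1)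
          = sgen' (4*m+3) n x (Ydig m n t x yd zd) (Zdig m n t x yd zd) (j+1) := by
        unfold sgen'
        apply Finset.sum_congr rfl
        intro i hi
        simp only [Finset.mem_Icc] at hi
        have hge : n - t ≤ i := by omega
        rw [(Ydig_hi hge).1, (Ydig_hi hge).2]
      have := hs (j+1) hcase
      rw [h2, h1] at this
      exact this
    · have hih := ih (by omega)
      simp only [bld, if_neg hcase]
      exact bstep_bound _ _ _ (bitd_le_one x _) hih.1 hih.2

lemma bld_even (htn : t < n)
    (hpar : ∀ i, n - t ≤ i → i ≤ n → (bitd x i + yd i + zd i) % 2 = 0) :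
    ∀ j ≤ n, Even (bld m n t x yd zd j).1 := by
  intro j hj
  induction j with
  | zero => simp [bld]
  | succ j ih =>
    by_cases hcase : j + 1 ≤ t
    · simp only [bld, if_pos hcase]
      have hp := inc_even (bitd x (n - (j+1))) (yd (n - (j+1))) (zd (n - (j+1))) (m : ℤ)
        (hpar (n - (j+1)) (by omega) (by omega))
      rw [Int.even_iff]
      omega
    · simp only [bld, if_neg hcase]
      exact bstep_even _ _ _

lemma dig_props (htn : t < n)
    (hyd : ∀ i, n - t ≤ i → i ≤ n → yd i ≤ 1)
    (hzd : ∀ i, n - t ≤ i → i ≤ n → zd i ≤ 1)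
    (hpar : ∀ i, n - t ≤ i → i ≤ n → (bitd x i + yd i + zd i) % 2 = 0) :
    ∀ i ≤ n, Ydig m n t x yd zd i ≤ 1 ∧ Zdig m n t x yd zd i ≤ 1 ∧
      (bitd x i + Ydig m n t x yd zd i + Zdig m n t x yd zd i) % 2 = 0 := by
  intro i hi
  by_cases h : n - t ≤ i
  · rw [(Ydig_hi h).1, (Ydig_hi h).2]
    exact ⟨hyd i h hi, hzd i h hi, hpar i h hi⟩
  · have hlt : i < n - t := by omega
    rw [(Ydig_lo hlt).1, (Ydig_lo hlt).2]
    have hni : n - i = (n - i - 1) + 1 := by omega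
    have hni2 : n - ((n - i - 1) + 1) = i := by omega
    rw [hni]
    have hb : ¬ (n - i - 1 + 1 ≤ t) := by omega
    simp only [bld, if_neg hb, hni2]
    exact bstep_digits m (bitd x i) _ (bitd_le_one x i)

end ctx

lemma sgen_even (m n x : ℕ) (f g : ℕ → ℕ)
    (hp : ∀ i ≤ n, (bitd x i + f i + g i) % 2 = 0)
    (hfn : f n = 0) (hgn : g n = 1) (hxn : bitd x n = 1) :
    ∀ j ≤ n, Even (sgen' (4*m+3) n x f g j) := by
  intro j hj
  induction j with
  | zero => rw [sgen'_zero, hfn, hgn, hxn]; simp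
  | succ j ih =>
    have hj' : j < n := by omega
    rw [sgen'_succ _ _ _ _ _ _ hj']
    have hp' := inc_even (bitd x (n - (j+1))) (f (n - (j+1))) (g (n - (j+1))) (m : ℤ)
      (hp (n - (j+1)) (by omega))
    have hevj := ih (by omega)
    rw [Int.even_iff] at hevj ⊢
    omega

lemma sgen_range (m n x : ℕ) (f g : ℕ → ℕ)
    (hf : ∀ i ≤ n, f i ≤ 1) (hg : ∀ i ≤ n, g i ≤ 1)
    (hp : ∀ i ≤ n, (bitd x i + f i + g i) % 2 = 0)
    (hfn : f n = 0) (hgn : g n = 1) (hxn : bitd x n = 1)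
    (hend0 : 0 ≤ sgen' (4*m+3) n x f g n) (hend1 : sgen' (4*m+3) n x f g n < 4*m+3) :
    ∀ j ≤ n, 0 ≤ sgen' (4*m+3) n x f g j ∧ sgen' (4*m+3) n x f g j < 4*m+3 := by
  set S := sgen' (4*m+3) n x f g with hS
  have hstep : ∀ j < n, 2 * S j - (4*m+3) ≤ S (j+1) ∧ S (j+1) ≤ 2 * S j + 2 := by
    intro j hj
    rw [hS, sgen'_succ _ _ _ _ _ _ hj]
    have hi : n - (j+1) ≤ n := by omega
    have h1 := bitd_le_one x (n - (j+1))
    have h2 := hf _ hi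
    have h3 := hg _ hi
    constructor <;> push_cast <;> nlinarith [Nat.cast_nonneg (α := ℤ) (f (n - (j+1))),
      Nat.cast_nonneg (α := ℤ) (g (n - (j+1))), Nat.cast_nonneg (α := ℤ) (bitd x (n - (j+1)))]
  have heven : ∀ j ≤ n, Even (S j) := sgen_even m n x f g hp hfn hgn hxn
  have habs : ∀ d j, j + d = n → (S j ≤ -2 ∨ 4*m+3 ≤ S j) → (S n ≤ -2 ∨ (4*m+3 : ℤ) ≤ S n) := by
    intro d
    induction d with
    | zero => intro j hj h; rw [show j = n by omega] at h; exact h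
    | succ d ih =>
      intro j hj h
      apply ih (j+1) (by omega)
      have hst := hstep j (by omega)
      rcases h with h | h
      · left; omega
      · right; omega
  intro j hj
  by_contra hcon
  push_neg at hcon
  have hbad : S j ≤ -2 ∨ (4*m+3:ℤ) ≤ S j := by
    have hev := heven j hj
    rw [Int.even_iff] at hev
    rcases le_or_gt 0 (S j) with h | h
    · right; exact hcon h
    · left; omega
  have := habs (n - j) j (by omega) hbad
  omega

lemma forced (m : ℕ) (s s1 s2 : ℤ) (xb y1 z1 y2 z2 : ℕ)
    (hxb : xb ≤ 1) (hy1 : y1 ≤ 1) (hz1 : z1 ≤ 1) (hy2 : y2 ≤ 1) (hz2 : z2 ≤ 1)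
    (hp1 : (xb + y1 + z1) % 2 = 0) (hp2 : (xb + y2 + z2) % 2 = 0)
    (hse : Even s) (hs0 : 0 ≤ s) (hs1 : s < 4*m+3)
    (e1 : s1 = 2*s + ((xb:ℤ) + z1 - (4*m+3)*y1)) (e2 : s2 = 2*s + ((xb:ℤ) + z2 - (4*m+3)*y2))
    (b1 : 0 ≤ s1) (b1' : s1 < 4*m+3) (b2 : 0 ≤ s2) (b2' : s2 < 4*m+3) :
    y1 = y2 ∧ z1 = z2 := by
  rw [Int.even_iff] at hse
  interval_cases y1 <;> interval_cases y2 <;> push_cast at e1 e2 <;>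
    constructor <;> omega
theorem stmt9 (m k t n : ℕ) (hk : k = 4 * m + 3) (htn : t < n)
    (x : ℕ) (hx : x < 2 ^ (n + 1)) (hxn : bitd x n = 1)
    (yd zd : ℕ → ℕ)
    (hyd : ∀ i, n - t ≤ i → i ≤ n → yd i ≤ 1)
    (hzd : ∀ i, n - t ≤ i → i ≤ n → zd i ≤ 1)
    (hpar : ∀ i, n - t ≤ i → i ≤ n → (bitd x i + yd i + zd i) % 2 = 0)
    (hyn : yd n = 0) (hzn : zd n = 1)
    (hs : ∀ j ≤ t, 0 ≤ sgen' (k : ℤ) n x yd zd j ∧ sgen' (k : ℤ) n x yd zd j < k) :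
    ∃! yz : ℕ × ℕ,
      yz.1 < 2 ^ (n + 1) ∧ yz.2 < 2 ^ (n + 1) ∧
      (∀ i, n - t ≤ i → i ≤ n → bitd yz.1 i = yd i ∧ bitd yz.2 i = zd i) ∧
      x ^^^ yz.1 ^^^ yz.2 = 0 ∧ yz.1 = (x + yz.2) / k := by
  subst hk
  have hKc : (((4 * m + 3 : ℕ)) : ℤ) = 4 * (m : ℤ) + 3 := by push_cast; ring
  rw [hKc] at hs
  obtain ⟨Y, hYdef⟩ : ∃ Y : ℕ → ℕ, Y = Ydig m n t x yd zd := ⟨_, rfl⟩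
  obtain ⟨Z, hZdef⟩ : ∃ Z : ℕ → ℕ, Z = Zdig m n t x yd zd := ⟨_, rfl⟩
  have DP : ∀ i ≤ n, Y i ≤ 1 ∧ Z i ≤ 1 ∧ (bitd x i + Y i + Z i) % 2 = 0 := by
    rw [hYdef, hZdef]; exact dig_props m t n x yd zd htn hyd hzd hpar
  have hY1 : ∀ i < n + 1, Y i ≤ 1 := fun i hi => (DP i (by omega)).1
  have hZ1 : ∀ i < n + 1, Z i ≤ 1 := fun i hi => (DP i (by omega)).2.1
  have hYhi : ∀ i, n - t ≤ i → Y i = yd i ∧ Z i = zd i := by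
    intro i h
    rw [hYdef, hZdef, (Ydig_hi h).1, (Ydig_hi h).2]
    exact ⟨rfl, rfl⟩
  have hYn : Y n = 0 := by rw [(hYhi n (by omega)).1, hyn]
  have hZn : Z n = 1 := by rw [(hYhi n (by omega)).2, hzn]
  obtain ⟨y0, hy0def⟩ : ∃ y0 : ℕ, y0 = ∑ i ∈ Finset.range (n + 1), Y i * 2 ^ i := ⟨_, rfl⟩
  obtain ⟨z0, hz0def⟩ : ∃ z0 : ℕ, z0 = ∑ i ∈ Finset.range (n + 1), Z i * 2 ^ i := ⟨_, rfl⟩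
  have hy0lt : y0 < 2 ^ (n + 1) := by rw [hy0def]; exact sum_bits_lt _ _ hY1
  have hz0lt : z0 < 2 ^ (n + 1) := by rw [hz0def]; exact sum_bits_lt _ _ hZ1
  have hby : ∀ i, bitd y0 i = if i < n + 1 then Y i else 0 := by
    rw [hy0def]; exact bitd_sum _ _ hY1
  have hbz : ∀ i, bitd z0 i = if i < n + 1 then Z i else 0 := by
    rw [hz0def]; exact bitd_sum _ _ hZ1
  have hbQ : ∀ j ≤ n, 0 ≤ sgen' (4 * (m:ℤ) + 3) n x Y Z j ∧
      sgen' (4 * (m:ℤ) + 3) n x Y Z j < 4 * (m:ℤ) + 3 := by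
    rw [hYdef, hZdef]
    intro j hj
    rw [bld_sgen m t n x yd zd htn hxn hyn hzn j hj]
    exact bld_bound m t n x yd zd htn hxn hyn hzn hs j hj
  have hevalQ : sgen' (4 * (m:ℤ) + 3) n x Y Z n
      = (x : ℤ) + (z0 : ℤ) - (4 * (m:ℤ) + 3) * (y0 : ℤ) :=
    sgen'_eval _ n x Y Z y0 z0 hx hy0def hz0def
  have hQn := hbQ n le_rfl
  rw [hevalQ] at hQn
  -- existence data
  have hdm : ∀ i, n - t ≤ i → i ≤ n → bitd y0 i = yd i ∧ bitd z0 i = zd i := by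
    intro i h1 h2
    rw [hby i, hbz i, if_pos (by omega), if_pos (by omega), (hYhi i h1).1, (hYhi i h1).2]
    exact ⟨rfl, rfl⟩
  have hxorQ : x ^^^ y0 = z0 := by
    have hlt := Nat.xor_lt_two_pow hx hy0lt
    rw [← sum_bitd_of_lt hlt, ← sum_bitd_of_lt hz0lt]
    apply Finset.sum_congr rfl
    intro i hi
    simp only [Finset.mem_range] at hi
    rw [bitd_xor, hby i, if_pos hi, hbz i, if_pos hi]
    congr 1
    have h1 := (DP i (by omega)).2.2
    have h2 := (DP i (by omega)).2.1
    have h3 := bitd_le_one x i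
    have h4 := (DP i (by omega)).1
    omega
  have hdivQ : y0 = (x + z0) / (4 * m + 3) := by
    symm
    apply Nat.div_eq_of_lt_le
    · have h := hQn.1
      zify
      nlinarith [h]
    · have h := hQn.2
      zify
      nlinarith [h]
  refine ⟨(y0, z0), ⟨hy0lt, hz0lt, hdm, by rw [hxorQ, Nat.xor_self], hdivQ⟩, ?_⟩
  -- uniqueness
  rintro ⟨y', z'⟩ ⟨H1, H2, H3, H4, H5⟩
  dsimp only at H1 H2 H3 H4 H5
  have hfz : x ^^^ y' = z' := xor_eq_zero_iff.mp H4
  have hf1 : ∀ i ≤ n, bitd y' i ≤ 1 := fun i _ => bitd_le_one y' i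
  have hg1 : ∀ i ≤ n, bitd z' i ≤ 1 := fun i _ => bitd_le_one z' i
  have hpf : ∀ i ≤ n, (bitd x i + bitd y' i + bitd z' i) % 2 = 0 := by
    intro i hi
    have h1 : bitd z' i = (bitd x i + bitd y' i) % 2 := by rw [← hfz, bitd_xor]
    have h2 := bitd_le_one x i
    have h3 := bitd_le_one y' i
    omega
  have hfn : bitd y' n = 0 := by rw [(H3 n (by omega) le_rfl).1, hyn]
  have hgn : bitd z' n = 1 := by rw [(H3 n (by omega) le_rfl).2, hzn]
  have hevalP : sgen' (4 * (m:ℤ) + 3) n x (bitd y') (bitd z') n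
      = (x : ℤ) + (z' : ℤ) - (4 * (m:ℤ) + 3) * (y' : ℤ) :=
    sgen'_eval _ n x (bitd y') (bitd z') y' z' hx (sum_bitd_of_lt H1).symm (sum_bitd_of_lt H2).symm
  have hmlt : (x + z') % (4 * m + 3) < 4 * m + 3 := Nat.mod_lt _ (by omega)
  have hendP : 0 ≤ sgen' (4 * (m:ℤ) + 3) n x (bitd y') (bitd z') n ∧
      sgen' (4 * (m:ℤ) + 3) n x (bitd y') (bitd z') n < 4 * (m:ℤ) + 3 := by
    rw [hevalP]
    have h1 : (4 * m + 3) * y' + (x + z') % (4 * m + 3) = x + z' := by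
      rw [H5]; exact Nat.div_add_mod _ _
    have h2 : (4 * (m:ℤ) + 3) * (y' : ℤ) + (((x + z') % (4 * m + 3) : ℕ) : ℤ)
        = (x : ℤ) + (z' : ℤ) := by exact_mod_cast congrArg (Nat.cast : ℕ → ℤ) h1
    have h3 : (0:ℤ) ≤ (((x + z') % (4 * m + 3) : ℕ) : ℤ) := Int.ofNat_nonneg _
    have h4 : (((x + z') % (4 * m + 3) : ℕ) : ℤ) < 4 * (m:ℤ) + 3 := by exact_mod_cast hmlt
    constructor <;> linarith
  have hrangeP := sgen_range m n x (bitd y') (bitd z') hf1 hg1 hpf hfn hgn hxn hendP.1 hendP.2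
  have hevenP := sgen_even m n x (bitd y') (bitd z') hpf hfn hgn hxn
  have key : ∀ j ≤ n, sgen' (4 * (m:ℤ) + 3) n x (bitd y') (bitd z') j
      = sgen' (4 * (m:ℤ) + 3) n x Y Z j ∧
      bitd y' (n - j) = Y (n - j) ∧ bitd z' (n - j) = Z (n - j) := by
    intro j hj
    induction j with
    | zero =>
      rw [Nat.sub_zero]
      refine ⟨?_, by rw [hfn, hYn], by rw [hgn, hZn]⟩
      rw [sgen'_zero, sgen'_zero, hfn, hgn, hYn, hZn]
    | succ j ih =>
      obtain ⟨hSeq, hfe, hge⟩ := ih (by omega)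
      have hj' : j < n := by omega
      have hdig : bitd y' (n - (j+1)) = Y (n - (j+1)) ∧ bitd z' (n - (j+1)) = Z (n - (j+1)) := by
        by_cases hcase : n - t ≤ n - (j+1)
        · have hH := H3 (n - (j+1)) hcase (by omega)
          rw [hH.1, hH.2, (hYhi _ hcase).1, (hYhi _ hcase).2]
          exact ⟨rfl, rfl⟩
        · have hin : n - (j+1) ≤ n := by omega
          refine forced m (sgen' (4 * (m:ℤ) + 3) n x (bitd y') (bitd z') j)
            (sgen' (4 * (m:ℤ) + 3) n x (bitd y') (bitd z') (j+1))
            (sgen' (4 * (m:ℤ) + 3) n x Y Z (j+1))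
            (bitd x (n - (j+1))) (bitd y' (n - (j+1))) (bitd z' (n - (j+1)))
            (Y (n - (j+1))) (Z (n - (j+1)))
            (bitd_le_one x _) (bitd_le_one y' _) (bitd_le_one z' _)
            ((DP _ hin).1) ((DP _ hin).2.1) (hpf _ hin) ((DP _ hin).2.2)
            (hevenP j (by omega)) (hrangeP j (by omega)).1 (hrangeP j (by omega)).2
            (sgen'_succ _ _ _ _ _ _ hj') ?_
            (hrangeP (j+1) hj).1 (hrangeP (j+1) hj).2
            (hbQ (j+1) hj).1 (hbQ (j+1) hj).2
          rw [sgen'_succ _ _ _ _ _ _ hj', hSeq]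
      refine ⟨?_, hdig⟩
      rw [sgen'_succ _ _ _ _ _ _ hj', sgen'_succ _ _ _ _ _ _ hj', hSeq, hdig.1, hdig.2]
  have hdigeq : ∀ i, i < n + 1 → bitd y' i = Y i ∧ bitd z' i = Z i := by
    intro i hi
    have hkey := (key (n - i) (by omega)).2
    rw [show n - (n - i) = i by omega] at hkey
    exact hkey
  have hy' : y' = y0 := by
    rw [← sum_bitd_of_lt H1, hy0def]
    exact Finset.sum_congr rfl fun i hi => by
      rw [(hdigeq i (Finset.mem_range.mp hi)).1]
  have hz' : z' = z0 := by
    rw [← sum_bitd_of_lt H2, hz0def]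
    exact Finset.sum_congr rfl fun i hi => by
      rw [(hdigeq i (Finset.mem_range.mp hi)).2]
  exact Prod.ext hy' hz'
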